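/- Let γ, θ ∈ (0,1], μ, σ ∈ (0,2], p, q ∈ (1,∞) with γq + θpq − pq + 1 > 0. Assume θ/σ ≤ γ/μ and (1 − θ)pq ≤ 1. Then min_{1≤i≤4} H_i(θ/σ) = E₁ and for every d₀ > 0, min_{1≤i≤4} H_i(d₀) ≤ E₁; that is, the supremum over d₀ > 0 of min_i H_i(d₀) is attained at d₀ = θ/σ and equals E₁ = (θμq+θσpq−σpq+σ)/(θ(pq−1)). -/

import Mathlib

/-- `H₁(d₀) = (q(γ+θp)−pq+1)/(d₀(pq−1))`. -/
noncomputable def H1 (γ θ p q d₀ : ℝ) : ℝ := (q * (γ + θ * p) - p * q + 1) / (d₀ * (p * q - 1))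

/-- `H₂(d₀) = (q(γ+d₀σp)−pq+1)/(d₀(pq−1))`. -/
noncomputable def H2 (γ σ p q d₀ : ℝ) : ℝ := (q * (γ + d₀ * σ * p) - p * q + 1) / (d₀ * (p * q - 1))

/-- `H₃(d₀) = (q(μd₀+θp)−pq+1)/(d₀(pq−1))`. -/
noncomputable def H3 (θ μ p q d₀ : ℝ) : ℝ := (q * (μ * d₀ + θ * p) - p * q + 1) / (d₀ * (p * q - 1))

/-- `H₄(d₀) = q(μ+σp)/(pq−1) − 1/d₀`. -/
noncomputable def H4 (μ σ p q d₀ : ℝ) : ℝ := q * (μ + σ * p) / (p * q - 1) - 1 / d₀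

/-- Case I of the proof of Lemma 7 (subcase `(1−θ)pq ≤ 1`): if `θ/σ ≤ γ/μ` and
`(1−θ)pq ≤ 1`, then the supremum over `d₀ > 0` of `min_i H_i(d₀)` is attained at
`d₀ = θ/σ` and equals `E₁ = (θμq+θσpq−σpq+σ)/(θ(pq−1))`. -/
theorem stmt15 (γ θ μ σ p q : ℝ)
    (hγ : γ ∈ Set.Ioc (0 : ℝ) 1) (hθ : θ ∈ Set.Ioc (0 : ℝ) 1)
    (hμ : μ ∈ Set.Ioc (0 : ℝ) 2) (hσ : σ ∈ Set.Ioc (0 : ℝ) 2)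
    (hp : 1 < p) (hq : 1 < q)
    (hpos : γ * q + θ * p * q - p * q + 1 > 0)
    (hcase : θ / σ ≤ γ / μ) (hsub : (1 - θ) * (p * q) ≤ 1) :
    min (min (H1 γ θ p q (θ / σ)) (H2 γ σ p q (θ / σ)))
        (min (H3 θ μ p q (θ / σ)) (H4 μ σ p q (θ / σ))) =
      (θ * μ * q + θ * σ * p * q - σ * p * q + σ) / (θ * (p * q - 1)) ∧
    ∀ d₀ > (0 : ℝ),
      min (min (H1 γ θ p q d₀) (H2 γ σ p q d₀)) (min (H3 θ μ p q d₀) (H4 μ σ p q d₀)) ≤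
        (θ * μ * q + θ * σ * p * q - σ * p * q + σ) / (θ * (p * q - 1)) := by
  obtain ⟨hγ0, hγ1⟩ := hγ
  obtain ⟨hθ0, hθ1⟩ := hθ
  obtain ⟨hμ0, hμ2⟩ := hμ
  obtain ⟨hσ0, hσ2⟩ := hσ
  have hD : 0 < p * q - 1 := by nlinarith
  have hds : 0 < θ / σ := div_pos hθ0 hσ0
  have hθμ : θ * μ ≤ γ * σ := by
    rw [div_le_div_iff₀ hσ0 hμ0] at hcase; linarith
  have hC : 0 ≤ θ * (p * q) - p * q + 1 := by nlinarith
  set E : ℝ := (θ * μ * q + θ * σ * p * q - σ * p * q + σ) / (θ * (p * q - 1)) with hE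
  have hE4 : H4 μ σ p q (θ / σ) = E := by
    unfold H4; rw [hE, div_sub_div _ _ hD.ne' hds.ne', div_eq_div_iff (by positivity) (by positivity)]; field_simp; ring
  have hE3 : H3 θ μ p q (θ / σ) = E := by
    unfold H3; rw [hE, div_eq_div_iff (by positivity) (by positivity)]
    field_simp
  have h21 : H2 γ σ p q (θ / σ) = H1 γ θ p q (θ / σ) := by
    unfold H1 H2
    rw [div_mul_cancel₀ θ hσ0.ne']
  have hE1 : E ≤ H1 γ θ p q (θ / σ) := by
    have h1 : H1 γ θ p q (θ / σ) = (σ * (q * (γ + θ * p) - p * q + 1)) / (θ * (p * q - 1)) := by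
      unfold H1; rw [div_eq_div_iff (by positivity) (by positivity)]; field_simp
    rw [hE, h1, div_le_div_iff₀ (by positivity) (by positivity)]
    nlinarith [mul_nonneg (mul_nonneg (by linarith : (0:ℝ) ≤ q) (sub_nonneg.2 hθμ)) (mul_pos hθ0 hD).le]
  constructor
  · rw [h21, hE3, hE4, min_self, min_self, min_eq_right hE1]
  · intro d₀ hd₀
    rcases le_total d₀ (θ / σ) with hle | hle
    · have h4 : H4 μ σ p q d₀ ≤ E := by
        rw [← hE4]; unfold H4
        have := one_div_le_one_div_of_le hd₀ hle
        linarith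
      exact le_trans (le_trans (min_le_right _ _) (min_le_right _ _)) h4
    · have hθσ : θ ≤ σ * d₀ := by
        rw [div_le_iff₀ hσ0] at hle; linarith
      have h3 : H3 θ μ p q d₀ ≤ E := by
        unfold H3
        rw [hE, div_le_div_iff₀ (by positivity) (by positivity)]
        nlinarith [mul_nonneg (mul_nonneg hD.le hC) (sub_nonneg.2 hθσ)]
      exact le_trans (le_trans (min_le_right _ _) (min_le_left _ _)) h3
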